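/- Let n be an integer, let a = −2 + 7n regarded as an element of ℚ₇, and let E_n be the elliptic curve over ℚ₇ with Weierstrass equation y² = x³ + a. Then E_n has a ℚ₇-rational point of exact order 7: there exists P ∈ E_n(ℚ₇) with P ≠ O and 7·P = O. -/

import Mathlib

instance : Fact (Nat.Prime 7) := ⟨by norm_num⟩

/-- The elliptic curve `Eₙ : y² = x³ + (−2 + 7n)` over `ℚ₇`. -/
noncomputable def En (n : ℤ) : WeierstrassCurve.Affine ℚ_[7] :=
  { a₁ := 0, a₂ := 0, a₃ := 0, a₄ := 0, a₆ := ((-2 + 7 * n : ℤ) : ℚ_[7]) }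

open WeierstrassCurve.Affine WeierstrassCurve.Affine.Point Polynomial

private lemma norm_int_unit (k : ℤ) (hk : ¬ (7:ℤ) ∣ k) : ‖((k : ℤ) : ℚ_[7])‖ = 1 := by
  refine le_antisymm (Padic.norm_int_le_one k) (not_lt.mp fun h => hk ?_)
  exact_mod_cast (Padic.norm_intCast_lt_one_iff (k := k)).mp h



private lemma some_congr' {F : Type*} [Field F] {W : WeierstrassCurve.Affine F}
    {x₁ y₁ x₂ y₂ : F} (hx : x₁ = x₂) (hy : y₁ = y₂) (h₁ : W.Nonsingular x₁ y₁)
    (h₂ : W.Nonsingular x₂ y₂) : WeierstrassCurve.Affine.Point.some _ _ h₁ =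
    WeierstrassCurve.Affine.Point.some _ _ h₂ := by
  subst hx; subst hy; rfl

private lemma norm_unit7 {x : ℚ_[7]} {k : ℤ} (hx : ((k : ℤ) : ℚ_[7]) = x) (hk : ¬ (7:ℤ) ∣ k) :
    ‖x‖ = 1 := by
  rw [← hx]
  refine le_antisymm (Padic.norm_int_le_one k) (not_lt.mp fun h => hk ?_)
  exact_mod_cast (Padic.norm_intCast_lt_one_iff (k := k)).mp h

private lemma norm7 : ‖(7 : ℚ_[7])‖ = (7:ℝ)⁻¹ := by
  have : ((7:ℕ) : ℚ_[7]) = 7 := by norm_cast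
  rw [← this, Padic.norm_p]; norm_num

open Classical in
/-- Lemma A.1 (existence): the curve `Eₙ : y² = x³ + (−2 + 7n)` has a `ℚ₇`-rational point of
exact order 7. -/
theorem stmt_3 (n : ℤ) :
    ∃ P : (En n).Point, P ≠ 0 ∧ 7 • P = 0 := by
  set a : ℚ_[7] := ((-2 + 7 * n : ℤ) : ℚ_[7]) with ha_def
  have ha0 : a ≠ 0 := by
    simp only [ha_def, ne_eq, Int.cast_eq_zero]
    omega
  -- step 1 : square root of -3
  have hnorm1 : ‖(X ^ 2 + C 3 : Polynomial ℤ_[7]).eval 2‖ <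
      ‖(X ^ 2 + C 3 : Polynomial ℤ_[7]).derivative.eval 2‖ ^ 2 := by
    have h1 : (X ^ 2 + C 3 : Polynomial ℤ_[7]).eval 2 = 7 := by
      simp; norm_num
    have h2 : (X ^ 2 + C 3 : Polynomial ℤ_[7]).derivative.eval 2 = 4 := by
      simp; norm_num
    rw [h1, h2]
    have h4 : ‖(4 : ℤ_[7])‖ = 1 := by
      have : ((4 : ℤ) : ℤ_[7]) = 4 := by norm_cast
      rw [← this, PadicInt.norm_intCast_eq_padic_norm]
      exact norm_int_unit 4 (by norm_num)
    have h7 : ‖(7 : ℤ_[7])‖ = (7:ℝ)⁻¹ := by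
      have : ((7:ℕ) : ℤ_[7]) = 7 := by norm_cast
      rw [← this, PadicInt.norm_p]; norm_num
    rw [h4, h7]; norm_num
  obtain ⟨s₀, hs₀, hs₀d, -, -⟩ := hensels_lemma hnorm1
  set s : ℚ_[7] := (s₀ : ℚ_[7]) with hs_def
  have hs : s ^ 2 = -3 := by
    simp only [coe_aeval_eq_eval, eval_add, eval_pow, eval_X, eval_C] at hs₀
    have : ((s₀ ^ 2 + 3 : ℤ_[7]) : ℚ_[7]) = 0 := by rw [hs₀]; norm_cast
    push_cast at this
    rw [show ((3:ℤ_[7]):ℚ_[7]) = 3 by norm_cast] at this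
    linear_combination this
  have hs2 : ‖s - 2‖ < 1 := by
    have h2' : (X ^ 2 + C 3 : Polynomial ℤ_[7]).derivative.eval 2 = 4 := by
      simp; norm_num
    rw [coe_aeval_eq_eval, h2'] at hs₀d
    have h4 : ‖(4 : ℤ_[7])‖ = 1 := by
      have : ((4 : ℤ) : ℤ_[7]) = 4 := by norm_cast
      rw [← this, PadicInt.norm_intCast_eq_padic_norm]
      exact norm_int_unit 4 (by norm_num)
    rw [h4] at hs₀d
    have : ‖s₀ - 2‖ = ‖s - 2‖ := by
      rw [PadicInt.norm_def]; congr 1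
    rwa [this] at hs₀d
  -- irrationality of s
  have hirr : ∀ r : ℚ, s ≠ (r : ℚ_[7]) := by
    intro r h
    have h2 : ((r ^ 2 + 3 : ℚ) : ℚ_[7]) = 0 := by push_cast; rw [← h]; linear_combination hs
    have h3 : (r ^ 2 + 3 : ℚ) = 0 := by exact_mod_cast h2
    nlinarith [sq_nonneg r]
  have hlin : ∀ c d : ℚ, d ≠ 0 → (c : ℚ_[7]) + (d : ℚ_[7]) * s ≠ 0 := by
    intro c d hd h
    apply hirr (-(c / d))
    have hd7 : (d : ℚ_[7]) ≠ 0 := by exact_mod_cast hd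
    push_cast
    field_simp
    linear_combination h
  -- norms
  have hsml : ‖(-3 : ℚ_[7]) * (s - 2)‖ < 1 := by
    rw [norm_mul, norm_unit7 (k := -3) (by norm_num) (by norm_num), one_mul]; exact hs2
  have hn13 : ‖(1 : ℚ_[7]) - 3 * s‖ = 1 := by
    have he : (1 : ℚ_[7]) - 3 * s = -5 + (-3) * (s - 2) := by ring
    have h5 : ‖(-5 : ℚ_[7])‖ = 1 := norm_unit7 (k := -5) (by norm_num) (by norm_num)
    rw [he, Padic.add_eq_max_of_ne (by rw [h5]; exact ne_of_gt hsml), h5,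
      max_eq_left (le_of_lt hsml)]
  have h13ne : (1 : ℚ_[7]) - 3 * s ≠ 0 := by
    intro h; rw [h, norm_zero] at hn13; norm_num at hn13
  have h28 : ((1 : ℚ_[7]) + 3 * s) * (1 - 3 * s) = 28 := by linear_combination -9 * hs
  have hn1p3 : ‖(1 : ℚ_[7]) + 3 * s‖ = (7:ℝ)⁻¹ := by
    have : ‖((1 : ℚ_[7]) + 3 * s) * (1 - 3 * s)‖ = (7:ℝ)⁻¹ := by
      rw [h28, show (28 : ℚ_[7]) = 4 * 7 by norm_num, norm_mul,
        norm_unit7 (k := 4) (by norm_num) (by norm_num), norm7]; ring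
    rwa [norm_mul, hn13, mul_one] at this
  set w : ℚ_[7] := (1 + 3 * s) / 7 with hw_def
  have h7ne : (7 : ℚ_[7]) ≠ 0 := by norm_num
  have hwdef : 7 * w = 1 + 3 * s := by rw [hw_def]; field_simp
  have hnw : ‖w‖ = 1 := by
    rw [hw_def, norm_div, hn1p3, norm7]; norm_num
  have hww : (w - 2) * (1 - 3 * s) = 14 * w := by
    linear_combination ((-13 - 3*s)/7) * hwdef + (-9/7) * hs
  have hnw2 : ‖w - 2‖ = (7:ℝ)⁻¹ := by
    have : ‖(w - 2) * (1 - 3 * s)‖ = (7:ℝ)⁻¹ := by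
      rw [hww, show (14 : ℚ_[7]) = 2 * 7 by norm_num, norm_mul, norm_mul,
        norm_unit7 (k := 2) (by norm_num) (by norm_num), norm7, hnw]; ring
    rwa [norm_mul, hn13, mul_one] at this
  -- theta = 2*a*w ; norm of 27 - theta
  have hnn : ‖(n : ℚ_[7])‖ ≤ 1 := by
    exact_mod_cast Padic.norm_int_le_one (p := 7) n
  have hid27 : (27 : ℚ_[7]) - 2 * a * w = 4 * (w - 2) + 35 - 14 * (n : ℚ_[7]) * w := by
    rw [ha_def]; push_cast; ring
  have hb1 : ‖(4 : ℚ_[7]) * (w - 2)‖ ≤ (7:ℝ)⁻¹ := by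
    rw [norm_mul, norm_unit7 (k := 4) (by norm_num) (by norm_num), hnw2]; norm_num
  have hb2 : ‖(14 : ℚ_[7]) * (n : ℚ_[7]) * w‖ ≤ (7:ℝ)⁻¹ := by
    rw [norm_mul, norm_mul, show (14 : ℚ_[7]) = 2 * 7 by norm_num, norm_mul,
      norm_unit7 (k := 2) (by norm_num) (by norm_num), norm7, hnw, mul_one, one_mul]
    calc 7⁻¹ * ‖(n : ℚ_[7])‖ ≤ 7⁻¹ * 1 := by
          apply mul_le_mul_of_nonneg_left hnn; norm_num
      _ = (7:ℝ)⁻¹ := by ring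
  have hb35 : ‖(35 : ℚ_[7])‖ ≤ (7:ℝ)⁻¹ := by
    rw [show (35 : ℚ_[7]) = 5 * 7 by norm_num, norm_mul, norm_unit7 (k := 5) (by norm_num) (by norm_num), norm7]
    norm_num
  have hn27 : ‖(27 : ℚ_[7]) - 2 * a * w‖ ≤ (7:ℝ)⁻¹ := by
    rw [hid27]
    calc ‖(4 : ℚ_[7]) * (w - 2) + 35 - 14 * (n : ℚ_[7]) * w‖
        ≤ max ‖(4 : ℚ_[7]) * (w - 2) + 35‖ ‖-(14 * (n : ℚ_[7]) * w)‖ := by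
          rw [sub_eq_add_neg]; exact Padic.nonarchimedean _ _
      _ ≤ max (max ‖(4 : ℚ_[7]) * (w - 2)‖ ‖(35 : ℚ_[7])‖) ‖-(14 * (n : ℚ_[7]) * w)‖ := by
          apply max_le_max_right; exact Padic.nonarchimedean _ _
      _ ≤ (7:ℝ)⁻¹ := by
          rw [norm_neg]
          exact max_le (max_le hb1 hb35) hb2
  have hθint : ‖2 * a * w‖ ≤ 1 := by
    have : (2 : ℚ_[7]) * a * w = 27 - (27 - 2 * a * w) := by ring
    rw [this]
    calc ‖(27 : ℚ_[7]) - (27 - 2 * a * w)‖ ≤ max ‖(27 : ℚ_[7])‖ ‖-(27 - 2 * a * w)‖ := by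
          rw [sub_eq_add_neg]; exact Padic.nonarchimedean _ _
      _ ≤ 1 := by
          rw [norm_neg, norm_unit7 (k := 27) (by norm_num) (by norm_num)]
          refine max_le le_rfl (le_trans hn27 (by norm_num))
  -- cube root x of theta = 2*a*w
  set θ' : ℤ_[7] := ⟨2 * a * w, hθint⟩ with hθ'_def
  have hθ'c : (θ' : ℚ_[7]) = 2 * a * w := rfl
  have hnorm2 : ‖(X ^ 3 - C θ' : Polynomial ℤ_[7]).eval 3‖ <
      ‖(X ^ 3 - C θ' : Polynomial ℤ_[7]).derivative.eval 3‖ ^ 2 := by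
    have h1 : (X ^ 3 - C θ' : Polynomial ℤ_[7]).eval 3 = 27 - θ' := by
      simp; try norm_num
    have h2 : (X ^ 3 - C θ' : Polynomial ℤ_[7]).derivative.eval 3 = 27 := by
      simp; try norm_num
      try norm_cast
    rw [h1, h2]
    have hc : ‖(27 : ℤ_[7]) - θ'‖ = ‖(27 : ℚ_[7]) - 2 * a * w‖ := by
      rw [PadicInt.norm_def]
      congr 1
      all_goals push_cast
      all_goals rfl
    have h27 : ‖(27 : ℤ_[7])‖ = 1 := by
      rw [PadicInt.norm_def]
      exact norm_unit7 (k := 27) (by norm_cast) (by norm_num)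
    rw [hc, h27]
    calc ‖(27 : ℚ_[7]) - 2 * a * w‖ ≤ (7:ℝ)⁻¹ := hn27
      _ < 1 ^ 2 := by norm_num
  obtain ⟨x₀, hx₀, -, -, -⟩ := hensels_lemma hnorm2
  set x : ℚ_[7] := (x₀ : ℚ_[7]) with hx_def
  have hx3 : x ^ 3 = 2 * a * w := by
    simp only [coe_aeval_eq_eval, eval_sub, eval_pow, eval_X, eval_C, sub_eq_zero] at hx₀
    calc x ^ 3 = ((x₀ ^ 3 : ℤ_[7]) : ℚ_[7]) := by push_cast; rfl
      _ = ((θ' : ℤ_[7]) : ℚ_[7]) := by rw [hx₀]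
      _ = 2 * a * w := rfl
  -- square root y of theta + a
  have hyint : ‖2 * a * w + a‖ ≤ 1 := by
    calc ‖2 * a * w + a‖ ≤ max ‖2 * a * w‖ ‖a‖ := Padic.nonarchimedean _ _
      _ ≤ 1 := by
        refine max_le hθint ?_
        rw [ha_def]
        exact Padic.norm_int_le_one _
  set c' : ℤ_[7] := ⟨2 * a * w + a, hyint⟩ with hc'_def
  have hc'c : (c' : ℚ_[7]) = 2 * a * w + a := rfl
  have hn4c : ‖(4 : ℚ_[7]) - (2 * a * w + a)‖ ≤ (7:ℝ)⁻¹ := by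
    have hid : (4 : ℚ_[7]) - (2 * a * w + a) =
        4 * (w - 2) + 14 - 14 * (n : ℚ_[7]) * w - 7 * (n : ℚ_[7]) := by
      rw [ha_def]; push_cast; ring
    have hb14 : ‖(14 : ℚ_[7])‖ ≤ (7:ℝ)⁻¹ := by
      rw [show (14 : ℚ_[7]) = 2 * 7 by norm_num, norm_mul,
        norm_unit7 (k := 2) (by norm_num) (by norm_num), norm7]; norm_num
    have hb7n : ‖(7 : ℚ_[7]) * (n : ℚ_[7])‖ ≤ (7:ℝ)⁻¹ := by
      rw [norm_mul, norm7]
      calc (7:ℝ)⁻¹ * ‖(n : ℚ_[7])‖ ≤ 7⁻¹ * 1 := by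
            apply mul_le_mul_of_nonneg_left hnn; norm_num
        _ = (7:ℝ)⁻¹ := by ring
    rw [hid]
    calc ‖(4 * (w - 2) + 14 - 14 * (n : ℚ_[7]) * w) - 7 * (n : ℚ_[7])‖
        ≤ max ‖4 * (w - 2) + 14 - 14 * (n : ℚ_[7]) * w‖ ‖-(7 * (n : ℚ_[7]))‖ := by
          rw [sub_eq_add_neg]; exact Padic.nonarchimedean _ _
      _ ≤ max (max ‖4 * (w - 2) + 14‖ ‖-(14 * (n : ℚ_[7]) * w)‖) ‖-(7 * (n : ℚ_[7]))‖ := by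
          apply max_le_max_right
          rw [sub_eq_add_neg]; exact Padic.nonarchimedean _ _
      _ ≤ max (max (max ‖4 * (w - 2)‖ ‖(14 : ℚ_[7])‖) ‖-(14 * (n : ℚ_[7]) * w)‖)
            ‖-(7 * (n : ℚ_[7]))‖ := by
          apply max_le_max_right; apply max_le_max_right
          exact Padic.nonarchimedean _ _
      _ ≤ (7:ℝ)⁻¹ := by
          rw [norm_neg, norm_neg]
          exact max_le (max_le (max_le hb1 hb14) hb2) hb7n
  have hnorm3 : ‖(X ^ 2 - C c' : Polynomial ℤ_[7]).eval 2‖ <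
      ‖(X ^ 2 - C c' : Polynomial ℤ_[7]).derivative.eval 2‖ ^ 2 := by
    have h1 : (X ^ 2 - C c' : Polynomial ℤ_[7]).eval 2 = 4 - c' := by
      simp; try norm_num
    have h2 : (X ^ 2 - C c' : Polynomial ℤ_[7]).derivative.eval 2 = 4 := by
      simp; try norm_num
      try norm_cast
    rw [h1, h2]
    have hc : ‖(4 : ℤ_[7]) - c'‖ = ‖(4 : ℚ_[7]) - (2 * a * w + a)‖ := by
      rw [PadicInt.norm_def]
      congr 1
      all_goals push_cast
      all_goals rfl
    have h4 : ‖(4 : ℤ_[7])‖ = 1 := by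
      rw [PadicInt.norm_def]
      exact norm_unit7 (k := 4) (by norm_cast) (by norm_num)
    rw [hc, h4]
    calc ‖(4 : ℚ_[7]) - (2 * a * w + a)‖ ≤ (7:ℝ)⁻¹ := hn4c
      _ < 1 ^ 2 := by norm_num
  obtain ⟨y₀, hy₀, -, -, -⟩ := hensels_lemma hnorm3
  set y : ℚ_[7] := (y₀ : ℚ_[7]) with hy_def
  have hy2 : y ^ 2 = 2 * a * w + a := by
    simp only [coe_aeval_eq_eval, eval_sub, eval_pow, eval_X, eval_C, sub_eq_zero] at hy₀
    calc y ^ 2 = ((y₀ ^ 2 : ℤ_[7]) : ℚ_[7]) := by push_cast; rfl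
      _ = ((c' : ℤ_[7]) : ℚ_[7]) := by rw [hy₀]
      _ = 2 * a * w + a := rfl
  -- nonvanishing
  have hwne : w ≠ 0 := by
    intro h
    rw [h, mul_zero] at hwdef
    exact hlin 1 3 (by norm_num) (by push_cast; linear_combination -hwdef)
  have hx0 : x ≠ 0 := by
    intro h
    have h0 : (2:ℚ_[7]) * a * w = 0 := by rw [← hx3, h]; ring
    rcases mul_eq_zero.mp h0 with h' | h'
    · rcases mul_eq_zero.mp h' with h'' | h''
      · norm_num at h''
      · exact ha0 h''
    · exact hwne h'
  have hy0 : y ≠ 0 := by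
    intro h
    have h0 : (2:ℚ_[7]) * a * w + a = 0 := by rw [← hy2, h]; ring
    have h9 : a * (9 + 6 * s) = 0 := by linear_combination 7 * h0 - 2 * a * hwdef
    rcases mul_eq_zero.mp h9 with h' | h'
    · exact ha0 h'
    · exact hlin 9 6 (by norm_num) (by push_cast; linear_combination h')
  -- the cube root of unity
  have h46 : (4:ℚ_[7]) * s + 6 ≠ 0 := by
    intro h
    exact hlin 6 4 (by norm_num) (by push_cast; linear_combination h)
  set z : ℚ_[7] := (s - 9) / (4 * s + 6) with hz_def
  have hzq : (4 * s + 6) * z = s - 9 := by rw [hz_def]; field_simp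
  have hzsum : z ^ 2 + z + 1 = 0 := by
    have h1 : (4*s+6)^2 * (z^2 + z + 1) = 21 * (s^2 + 3) := by
      linear_combination ((4*s+6)*z + (s-9) + (4*s+6)) * hzq
    have h2 : (4*s+6)^2 * (z^2 + z + 1) = 0 := by rw [h1]; linear_combination 21 * hs
    rcases mul_eq_zero.mp h2 with h' | h'
    · exact absurd h' (pow_ne_zero 2 h46)
    · exact h'
  have hz3 : z ^ 3 = 1 := by linear_combination (z - 1) * hzsum
  have hz0 : z ≠ 0 := by
    intro h
    rw [h, mul_zero] at hzq
    exact hlin (-9) 1 (by norm_num) (by push_cast; linear_combination -hzq)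
  have hz1 : z ≠ 1 := by
    intro h
    rw [h, mul_one] at hzq
    exact hlin 15 3 (by norm_num) (by push_cast; linear_combination hzq)
  -- curve relations
  have hx7 : 7 * x ^ 3 = 2 * a * (1 + 3 * s) := by
    linear_combination 7 * hx3 + 2 * a * hwdef
  have hEx : y ^ 2 = x ^ 3 + a := by linear_combination hy2 - hx3
  have hns : ∀ u v : ℚ_[7], v ^ 2 = u ^ 3 + a → v ≠ 0 → (En n).Nonsingular u v := by
    intro u v he hv
    rw [WeierstrassCurve.Affine.nonsingular_iff, WeierstrassCurve.Affine.equation_iff]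
    constructor
    · simp only [En, ← ha_def]
      linear_combination he
    · right
      simp only [En, ← ha_def]
      intro hveq
      apply hv
      linear_combination hveq / 2
  -- doubling lemma : 2 • (u, v) = (z * u, v)
  have hdbl : ∀ (u v : ℚ_[7]), 7 * u ^ 3 = 2 * a * (1 + 3 * s) →
      v ^ 2 = u ^ 3 + a → v ≠ 0 →
      ∀ (h : (En n).Nonsingular u v) (h' : (En n).Nonsingular (z * u) v),
      Point.some _ _ h + Point.some _ _ h = Point.some _ _ h' := by
    intro u v hu hv2 hv h h'
    have hy_ne : v ≠ (En n).negY u v := by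
      simp only [WeierstrassCurve.Affine.negY, En]
      intro hveq
      apply hv
      linear_combination hveq / 2
    have hsl : (En n).slope u u v v = 3 * u ^ 2 / (2 * v) := by
      rw [slope_of_Y_ne rfl hy_ne]
      simp only [WeierstrassCurve.Affine.negY, En]
      congr 1
      · ring
      · ring
    have hX : (En n).addX u u ((En n).slope u u v v) = z * u := by
      rw [hsl]
      simp only [WeierstrassCurve.Affine.addX, En]
      rw [hz_def]
      field_simp [show s * 4 + 6 ≠ 0 by rwa [mul_comm]]
      linear_combination (6*u) * hu + (-12*u - 36*s*u) * hv2
    have hY : (En n).addY u u v ((En n).slope u u v v) = v := by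
      rw [WeierstrassCurve.Affine.addY, WeierstrassCurve.Affine.negAddY, hX, hsl]
      simp only [WeierstrassCurve.Affine.negY, En]
      rw [hz_def]
      field_simp [show s * 4 + 6 ≠ 0 by rwa [mul_comm]]
      linear_combination (-6*a) * hs + (3 - s) * hu + (-24 - 16*s) * hv2
    rw [WeierstrassCurve.Affine.Point.add_self_of_Y_ne hy_ne]
    exact some_congr' hX hY _ _
  -- the points
  have hP : (En n).Nonsingular x y := hns x y hEx hy0
  have hEx2 : y ^ 2 = (z * x) ^ 3 + a := by linear_combination hEx - x ^ 3 * hz3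
  have hA : (En n).Nonsingular (z * x) y := hns (z * x) y hEx2 hy0
  have hu2 : 7 * (z * x) ^ 3 = 2 * a * (1 + 3 * s) := by
    linear_combination hx7 + 7 * x ^ 3 * hz3
  have hEx3 : y ^ 2 = (z * (z * x)) ^ 3 + a := by
    linear_combination hEx - x ^ 3 * (z ^ 3 + 1) * hz3
  have hB : (En n).Nonsingular (z * (z * x)) y := hns (z * (z * x)) y hEx3 hy0
  have hC : (En n).Nonsingular x (-y) := hns x (-y) (by linear_combination hEx) (neg_ne_zero.mpr hy0)
  have e2 : Point.some _ _ hP + Point.some _ _ hP = Point.some _ _ hA := hdbl x y hx7 hEx hy0 hP hA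
  have e4 : Point.some _ _ hA + Point.some _ _ hA = Point.some _ _ hB := hdbl (z * x) y hu2 hEx2 hy0 hA hB
  have hxne : z * (z * x) ≠ z * x := by
    intro h
    have h0 : z * x * (z - 1) = 0 := by linear_combination h
    rcases mul_eq_zero.mp h0 with h' | h'
    · rcases mul_eq_zero.mp h' with h'' | h''
      · exact hz0 h''
      · exact hx0 h''
    · exact hz1 (by linear_combination h')
  have hsl0 : (En n).slope (z * (z * x)) (z * x) y y = 0 := by
    rw [slope_of_X_ne hxne]
    simp
  have e5 : Point.some _ _ hB + Point.some _ _ hA = Point.some _ _ hC := by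
    rw [WeierstrassCurve.Affine.Point.add_of_X_ne hxne]
    refine some_congr' ?_ ?_ _ _
    · rw [hsl0]
      simp only [WeierstrassCurve.Affine.addX, En]
      linear_combination (-x) * hzsum
    · rw [WeierstrassCurve.Affine.addY, WeierstrassCurve.Affine.negAddY, hsl0]
      simp only [WeierstrassCurve.Affine.negY, En]
      ring
  have e6 : Point.some _ _ hC + Point.some _ _ hP = 0 := by
    apply WeierstrassCurve.Affine.Point.add_of_Y_eq rfl
    simp only [WeierstrassCurve.Affine.negY, En]
    ring
  refine ⟨Point.some _ _ hP, WeierstrassCurve.Affine.Point.some_ne_zero hP, ?_⟩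
  have h7 : 7 • Point.some _ _ hP =
      ((Point.some _ _ hP + Point.some _ _ hP) + (Point.some _ _ hP + Point.some _ _ hP) +
        (Point.some _ _ hP + Point.some _ _ hP)) + Point.some _ _ hP := by abel
  rw [h7, e2, e4, e5, e6]
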